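/- Let 𝔤 be the 4-dimensional real Lie algebra with basis X₁, X₂, X₃, X₄ and nonzero brackets [X₂,X₃] = -X₁, [X₄,X₂] = X₂, [X₄,X₃] = -X₃. Fix q ∈ ℝ and define J by JX₁ = X₂, JX₂ = -X₁, JX₃ = X₄ - qX₂, JX₄ = -X₃ - qX₁. Then the bracket satisfies the Jacobi identity, J² = -id, and the Nijenhuis tensor of J vanishes. -/
import Mathlib


/-- The bracket of the 4-dimensional solvable Lie algebra with basis
`X₁, X₂, X₃, X₄` (coordinates `0,1,2,3`) and nonzero brackets
`[X₂,X₃] = -X₁`, `[X₄,X₂] = X₂`, `[X₄,X₃] = -X₃`, extended bilinearly. -/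
def br17 (x y : Fin 4 → ℝ) : Fin 4 → ℝ :=
  ![-(x 1 * y 2 - x 2 * y 1), x 3 * y 1 - x 1 * y 3, -(x 3 * y 2 - x 2 * y 3), 0]

/-- For `q ∈ ℝ`, the almost complex structure with `JX₁ = X₂`, `JX₂ = -X₁`,
`JX₃ = X₄ - qX₂`, `JX₄ = -X₃ - qX₁`, extended linearly. -/
def J17 (q : ℝ) (x : Fin 4 → ℝ) : Fin 4 → ℝ :=
  ![-(x 1) - q * x 3, x 0 - q * x 2, -(x 3), x 2]

/-- On the solvable Lie algebra of Inoue surfaces of type `S⁺`/`S⁻`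
(`[X₂,X₃] = -X₁`, `[X₄,X₂] = X₂`, `[X₄,X₃] = -X₃`, all other brackets zero),
the bracket satisfies the Jacobi identity, and for each `q ∈ ℝ` the map `J`
with `JX₁ = X₂`, `JX₂ = -X₁`, `JX₃ = X₄ - qX₂`, `JX₄ = -X₃ - qX₁` satisfies
`J² = -id` and has vanishing Nijenhuis tensor. -/
theorem stmt_17 (q : ℝ) :
    (∀ x y z : Fin 4 → ℝ,
      br17 x (br17 y z) + br17 y (br17 z x) + br17 z (br17 x y) = 0) ∧
    (∀ x : Fin 4 → ℝ, J17 q (J17 q x) = -x) ∧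
    (∀ x y : Fin 4 → ℝ,
      br17 (J17 q x) (J17 q y) - J17 q (br17 (J17 q x) y)
        - J17 q (br17 x (J17 q y)) - br17 x y = 0) := by
  refine ⟨fun x y z => ?_, fun x => ?_, fun x y => ?_⟩ <;>
    funext i <;> fin_cases i <;>
    simp [br17, J17, Fin.isValue, Matrix.cons_val_zero, Matrix.cons_val_one,
      Matrix.head_cons] <;> ring
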